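/- If a convex set F ⊆ ℝⁿ has the property that P(F) is closed for every orthogonal projection P, then every polynomial f bounded below on F with at least one nonempty convex sub-level set on F attains its infimum on F. -/

import Mathlib

open Pointwise

noncomputable section

/-- A quadratic function on a real vector space. -/
def IsQuadratic {E : Type*} [AddCommGroup E] [Module ℝ E] (f : E → ℝ) : Prop :=
  ∃ (B : E →ₗ[ℝ] E →ₗ[ℝ] ℝ) (l : E →ₗ[ℝ] ℝ) (c : ℝ), ∀ x, f x = B x x + l x + c

/-- An affine subspace `M` is an f-asymptote of `F` if it is nonempty, disjoint
from `F`, and at zero distance from `F`. -/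
def IsFAsymptote {E : Type*} [NormedAddCommGroup E] [NormedSpace ℝ E]
    (M : AffineSubspace ℝ E) (F : Set E) : Prop :=
  (M : Set E).Nonempty ∧ F ∩ (M : Set E) = ∅ ∧
    ∀ ε : ℝ, 0 < ε → ∃ x ∈ F, ∃ y ∈ (M : Set E), dist x y < ε

set_option maxRecDepth 8000

noncomputable section

variable {n : ℕ}

abbrev Esp (n : ℕ) := EuclideanSpace ℝ (Fin n)

def evalFn (f : MvPolynomial (Fin n) ℝ) : Esp n → ℝ :=
  fun x => MvPolynomial.eval (fun i => x i) f

lemma evalFn_continuous (f : MvPolynomial (Fin n) ℝ) : Continuous (evalFn f) := by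
  have h1 : Continuous fun x : Fin n → ℝ => MvPolynomial.eval x f :=
    f.continuous_eval
  exact h1.comp (PiLp.continuous_ofLp (p := 2) (β := fun _ : Fin n => ℝ))

lemma line_poly (f : MvPolynomial (Fin n) ℝ) (b d : Esp n) :
    ∃ p : Polynomial ℝ, ∀ t : ℝ, p.eval t = evalFn f (b + t • d) := by
  refine ⟨MvPolynomial.aeval
    (fun i => Polynomial.C (b i) + Polynomial.C (d i) * Polynomial.X) f, fun t => ?_⟩
  have h := MvPolynomial.comp_aeval_apply (R := ℝ)
    (f := fun i : Fin n => Polynomial.C (b i) + Polynomial.C (d i) * Polynomial.X)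
    (Polynomial.aeval t : Polynomial ℝ →ₐ[ℝ] ℝ) f
  have h2 : (fun i : Fin n => (Polynomial.aeval t)
      (Polynomial.C (b i) + Polynomial.C (d i) * Polynomial.X))
      = fun i : Fin n => (b + t • d) i := by
    funext i
    simp only [map_add, map_mul, Polynomial.aeval_C, Polynomial.aeval_X,
      Algebra.algebraMap_self, RingHom.id_apply, PiLp.add_apply, PiLp.smul_apply, smul_eq_mul]
    ring
  show Polynomial.eval t _ = MvPolynomial.eval (fun i => (b + t • d) i) f
  rw [← Polynomial.coe_aeval_eq_eval, ← MvPolynomial.coe_aeval_eq_eval]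
  rw [h2] at h
  exact h

lemma poly_const_of_bdd (p : Polynomial ℝ) (lo hi : ℝ)
    (h : ∀ t : ℝ, 0 ≤ t → lo ≤ p.eval t ∧ p.eval t ≤ hi) :
    ∀ t : ℝ, p.eval t = p.eval 0 := by
  have hdeg : ¬ 0 < p.degree := by
    intro hd
    have habs := Polynomial.abs_tendsto_atTop p hd
    obtain ⟨t, h1, h0⟩ :=
      ((habs.eventually_gt_atTop (max |lo| |hi|)).and (Filter.eventually_ge_atTop 0)).exists
    obtain ⟨hl, hr⟩ := h t h0
    have : |p.eval t| ≤ max |lo| |hi| := by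
      apply abs_le.mpr
      constructor
      · calc -(max |lo| |hi|) ≤ -|lo| := by simp
          _ ≤ lo := neg_abs_le lo
          _ ≤ _ := hl
      · exact hr.trans ((le_abs_self hi).trans (le_max_right _ _))
    linarith
  have := Polynomial.eq_C_of_degree_le_zero (not_lt.mp hdeg)
  intro t; rw [this]; simp

lemma bounded_case (f : MvPolynomial (Fin n) ℝ) (F : Set (Esp n))
    (hproj : ∀ K : Submodule ℝ (Esp n),
      IsClosed ((fun x => (Submodule.orthogonalProjectionOnto K x : Esp n)) '' F))
    (m : ℝ) (V : Submodule ℝ (Esp n)) (C : Set (Esp n))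
    (hCc : IsClosed C)
    (hinv : ∀ x ∈ C, ∀ v ∈ V, evalFn f (x + v) = evalFn f x)
    (hsub : C ⊆ closure ((fun x => (Submodule.orthogonalProjectionOnto Vᗮ x : Esp n)) '' F))
    (R : ℝ) (happ : ∀ ε : ℝ, 0 < ε → ∃ x ∈ C, ‖x‖ ≤ R ∧ evalFn f x < m + ε) :
    ∃ x ∈ F, evalFn f x ≤ m := by
  have hy : ∀ j : ℕ, ∃ x ∈ C, ‖x‖ ≤ R ∧ evalFn f x < m + 1/(j+1) := fun j =>
    happ _ (by positivity)
  choose y hyC hyR hyv using hy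
  obtain ⟨a, haball, ψ, hψ, htend⟩ := (isCompact_closedBall (0:Esp n) R).tendsto_subseq
    (fun j => mem_closedBall_zero_iff.mpr (hyR j))
  have haC : a ∈ C := hCc.mem_of_tendsto htend (Filter.Eventually.of_forall fun i => hyC _)
  have hφa : evalFn f a ≤ m := by
    have h1 : Filter.Tendsto (fun i => evalFn f (y (ψ i))) Filter.atTop (nhds (evalFn f a)) :=
      (evalFn_continuous f).continuousAt.tendsto.comp htend
    have h2 : Filter.Tendsto (fun i : ℕ => m + 1/((i:ℝ)+1)) Filter.atTop (nhds m) := by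
      simpa using (tendsto_one_div_add_atTop_nhds_zero_nat).const_add m
    refine le_of_tendsto_of_tendsto' h1 h2 fun i => ?_
    have h3 := hyv (ψ i)
    have hci : (i:ℝ) ≤ (ψ i : ℝ) := by exact_mod_cast hψ.le_apply
    have hle : (1:ℝ)/((ψ i : ℝ)+1) ≤ 1/((i:ℝ)+1) :=
      one_div_le_one_div_of_le (by positivity) (by linarith)
    have : evalFn f (y (ψ i)) < m + 1/((ψ i : ℝ)+1) := by exact_mod_cast h3
    linarith
  have hmem : a ∈ (fun x => (Submodule.orthogonalProjectionOnto Vᗮ x : Esp n)) '' F := by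
    have := hsub haC; rwa [(hproj Vᗮ).closure_eq] at this
  obtain ⟨x, hxF, hxa⟩ := hmem
  have hv : x - a ∈ V := by
    have h : x - (Submodule.orthogonalProjectionOnto Vᗮ x : Esp n) ∈ Vᗮᗮ :=
      Submodule.sub_starProjection_mem_orthogonal (K := Vᗮ) x
    simp only at hxa
    rw [hxa] at h
    rwa [Submodule.orthogonal_orthogonal] at h
  refine ⟨x, hxF, ?_⟩
  have h5 : evalFn f (a + (x - a)) = evalFn f a := hinv a haC _ hv
  have hx : a + (x - a) = x := by abel
  rw [hx] at h5
  exact h5.le.trans hφa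

lemma main_induction (f : MvPolynomial (Fin n) ℝ) (F : Set (Esp n))
    (hproj : ∀ K : Submodule ℝ (Esp n),
      IsClosed ((fun x => (Submodule.orthogonalProjectionOnto K x : Esp n)) '' F))
    (m α : ℝ) :
    ∀ k : ℕ, ∀ (V : Submodule ℝ (Esp n)) (C : Set (Esp n)),
      Module.finrank ℝ Vᗮ ≤ k →
      C.Nonempty → IsClosed C → Convex ℝ C → (C ⊆ (Vᗮ : Set (Esp n))) →
      (∀ x ∈ C, m ≤ evalFn f x ∧ evalFn f x ≤ α) →
      (∀ ε : ℝ, 0 < ε → ∃ x ∈ C, evalFn f x < m + ε) →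
      (∀ x ∈ C, ∀ v ∈ V, evalFn f (x + v) = evalFn f x) →
      (C ⊆ closure ((fun x => (Submodule.orthogonalProjectionOnto Vᗮ x : Esp n)) '' F)) →
      ∃ x ∈ F, evalFn f x ≤ m := by
  intro k
  induction k with
  | zero =>
    intro V C hrk hCne hCc hCconv hCV hbounds happ hinv hsub
    have hbot : Vᗮ = ⊥ := Submodule.finrank_eq_zero.mp (Nat.le_zero.mp hrk)
    refine bounded_case f F hproj m V C hCc hinv hsub 0 fun ε hε => ?_
    obtain ⟨x, hxC, hxv⟩ := happ ε hε
    refine ⟨x, hxC, ?_, hxv⟩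
    have hx0 : x ∈ (⊥ : Submodule ℝ (Esp n)) := hbot ▸ hCV hxC
    simp [(Submodule.mem_bot ℝ).mp hx0]
  | succ k ih =>
    intro V C hrk hCne hCc hCconv hCV hbounds happ hinv hsub
    by_cases hbd : ∃ R, ∀ ε : ℝ, 0 < ε → ∃ x ∈ C, ‖x‖ ≤ R ∧ evalFn f x < m + ε
    · obtain ⟨R, hR⟩ := hbd
      exact bounded_case f F hproj m V C hCc hinv hsub R hR
    push_neg at hbd
    -- unbounded minimizing sequence
    have hx : ∀ j : ℕ, ∃ x ∈ C, (j:ℝ) < ‖x‖ ∧ evalFn f x < m + 1/((j:ℝ)+1) := by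
      intro j
      obtain ⟨ε, hε, hεbig⟩ := hbd (j:ℝ)
      have hδ : 0 < min ε (1/((j:ℝ)+1)) := lt_min hε (by positivity)
      obtain ⟨x, hxC, hxv⟩ := happ _ hδ
      have hxε : evalFn f x < m + ε :=
        hxv.trans_le (add_le_add_right (min_le_left _ _) m)
      have hxj : evalFn f x < m + 1/((j:ℝ)+1) :=
        hxv.trans_le (add_le_add_right (min_le_right _ _) m)
      refine ⟨x, hxC, ?_, hxj⟩
      by_contra hn
      push_neg at hn
      exact absurd hxε (not_lt.mpr (hεbig x hxC hn))
    choose x hxC hxnorm hxval using hx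
    have hxpos : ∀ j, 0 < ‖x j‖ := fun j =>
      lt_of_le_of_lt (Nat.cast_nonneg j) (hxnorm j)
    set u : ℕ → Esp n := fun j => (‖x j‖)⁻¹ • x j with hu
    have husph : ∀ j, u j ∈ Metric.sphere (0:Esp n) 1 := by
      intro j
      rw [mem_sphere_zero_iff_norm, hu, norm_smul, norm_inv, norm_norm]
      exact inv_mul_cancel₀ (hxpos j).ne'
    obtain ⟨d, hdsph, ψ, hψ, hdt⟩ := (isCompact_sphere (0:Esp n) 1).tendsto_subseq husph
    have hdnorm : ‖d‖ = 1 := mem_sphere_zero_iff_norm.mp hdsph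
    have hdV : d ∈ Vᗮ := by
      have hclosed : IsClosed ((Vᗮ : Submodule ℝ (Esp n)) : Set (Esp n)) :=
        Submodule.closed_of_finiteDimensional _
      exact hclosed.mem_of_tendsto hdt (Filter.Eventually.of_forall fun i =>
        Submodule.smul_mem _ _ (hCV (hxC (ψ i))))
    have hnorm_top : Filter.Tendsto (fun i => ‖x (ψ i)‖) Filter.atTop Filter.atTop := by
      apply Filter.tendsto_atTop_mono (fun i => (hxnorm (ψ i)).le.trans' ?_)
        tendsto_natCast_atTop_atTop
      exact_mod_cast Nat.cast_le.mpr hψ.le_apply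
    -- recession direction
    have hrec : ∀ z ∈ C, ∀ t : ℝ, 0 ≤ t → z + t • d ∈ C := by
      intro z hz t ht
      set c : ℕ → ℝ := fun i => t * (‖x (ψ i)‖)⁻¹ with hc
      have hc0 : Filter.Tendsto c Filter.atTop (nhds 0) := by
        have := hnorm_top.inv_tendsto_atTop
        simpa [hc] using this.const_mul t
      have hseq : Filter.Tendsto (fun i => z + c i • (x (ψ i) - z))
          Filter.atTop (nhds (z + t • d)) := by
        have h1 : Filter.Tendsto (fun i => z + t • u (ψ i) - c i • z)
            Filter.atTop (nhds (z + t • d - (0:ℝ) • z)) :=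
          (tendsto_const_nhds.add ((hdt.const_smul t))).sub (hc0.smul_const z)
        have h2 : (fun i => z + t • u (ψ i) - c i • z)
            = fun i => z + c i • (x (ψ i) - z) := by
          funext i
          simp only [hu, hc, smul_sub, mul_smul]
          abel
        rw [h2] at h1
        simpa using h1
      apply hCc.mem_of_tendsto hseq
      have hev : ∀ᶠ i in Filter.atTop, t ≤ ‖x (ψ i)‖ := hnorm_top.eventually_ge_atTop t
      filter_upwards [hev] with i hi
      have hc1 : c i ≤ 1 := by
        have h2 : t * ‖x (ψ i)‖⁻¹ ≤ ‖x (ψ i)‖ * ‖x (ψ i)‖⁻¹ :=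
          mul_le_mul_of_nonneg_right hi (inv_nonneg.mpr (norm_nonneg _))
        rw [mul_inv_cancel₀ (hxpos (ψ i)).ne'] at h2
        exact h2
      have hcnn : 0 ≤ c i := mul_nonneg ht (inv_nonneg.mpr (norm_nonneg _))
      have hmm := hCconv hz (hxC (ψ i)) (sub_nonneg.mpr hc1) hcnn
        (by ring : (1 - c i) + c i = 1)
      have heq : (1 - c i) • z + c i • x (ψ i) = z + c i • (x (ψ i) - z) := by
        rw [smul_sub, sub_smul, one_smul]; abel
      rw [heq] at hmm
      exact hmm
    -- combined invariance along V and d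
    have hinv' : ∀ z ∈ C, ∀ v ∈ V, ∀ t : ℝ, evalFn f (z + v + t • d) = evalFn f z := by
      intro z hz v hv t
      obtain ⟨p, hp⟩ := line_poly f (z + v) d
      have hb : ∀ s : ℝ, 0 ≤ s → m ≤ p.eval s ∧ p.eval s ≤ α := by
        intro s hs
        have hzs : z + s • d ∈ C := hrec z hz s hs
        have h1 : evalFn f (z + s • d + v) = evalFn f (z + s • d) := hinv _ hzs v hv
        have heq : z + v + s • d = z + s • d + v := by abel
        rw [hp s, heq, h1]
        exact hbounds _ hzs
      have hconst := poly_const_of_bdd p m α hb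
      have h0 : p.eval 0 = evalFn f z := by
        rw [hp 0]
        have : z + v + (0:ℝ) • d = z + v := by simp
        rw [this]
        exact hinv z hz v hv
      rw [← hp t, hconst t, h0]
    set V' := V ⊔ Submodule.span ℝ {d} with hV'
    have hdV' : d ∈ V' := (le_sup_right : Submodule.span ℝ {d} ≤ V') (Submodule.mem_span_singleton_self d)
    have hVle : V ≤ V' := le_sup_left
    have hinvV' : ∀ z ∈ C, ∀ w ∈ V', evalFn f (z + w) = evalFn f z := by
      intro z hz w hw
      obtain ⟨v, hv, s, hs, hws⟩ := Submodule.mem_sup.mp hw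
      obtain ⟨t, ht⟩ := Submodule.mem_span_singleton.mp hs
      have := hinv' z hz v hv t
      rw [← this]
      congr 1
      rw [← hws, ← ht]
      abel
    set Q : Esp n → Esp n := fun y => (Submodule.orthogonalProjectionOnto V'ᗮ y : Esp n) with hQ
    have hQcont : Continuous Q := ((V'ᗮ).subtypeL.comp (Submodule.orthogonalProjectionOnto V'ᗮ)).continuous
    have hQdiff : ∀ z : Esp n, ∃ w ∈ V', Q z = z + w := by
      intro z
      have hm : z - Q z ∈ V'ᗮᗮ := Submodule.sub_starProjection_mem_orthogonal (K := V'ᗮ) z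
      rw [Submodule.orthogonal_orthogonal] at hm
      exact ⟨-(z - Q z), Submodule.neg_mem _ hm, by abel⟩
    have hφQ : ∀ z ∈ C, evalFn f (Q z) = evalFn f z := by
      intro z hz
      obtain ⟨w, hw, hQz⟩ := hQdiff z
      rw [hQz]
      exact hinvV' z hz w hw
    -- strict decrease of dimension
    have hlt : V'ᗮ < Vᗮ := by
      refine lt_of_le_of_ne (Submodule.orthogonal_le hVle) ?_
      intro heq
      have hd' : d ∈ V'ᗮ := heq ▸ hdV
      have hd0 : d = 0 := inner_self_eq_zero.mp
        ((Submodule.mem_orthogonal _ d).mp hd' d hdV')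
      rw [hd0] at hdnorm
      norm_num at hdnorm
    have hrk' : Module.finrank ℝ (V'ᗮ : Submodule ℝ (Esp n)) ≤ k := by
      have h1 := Submodule.finrank_lt_finrank_of_lt hlt
      omega
    -- apply induction hypothesis to C' := closure (Q '' C)
    apply ih V' (closure (Q '' C)) hrk'
    · exact (hCne.image Q).closure
    · exact isClosed_closure
    · refine Convex.closure ?_
      have : Q '' C = ((V'ᗮ).subtypeL.comp (Submodule.orthogonalProjectionOnto V'ᗮ)).toLinearMap '' C := rfl
      rw [this]
      exact hCconv.linear_image _
    · apply closure_minimal _ (Submodule.closed_of_finiteDimensional _)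
      rintro y ⟨z, hz, rfl⟩
      exact SetLike.coe_mem _
    · have hS : IsClosed (evalFn f ⁻¹' (Set.Icc m α)) :=
        (isClosed_Icc).preimage (evalFn_continuous f)
      have himg : Q '' C ⊆ evalFn f ⁻¹' (Set.Icc m α) := by
        rintro y ⟨z, hz, rfl⟩
        have := hbounds z hz
        simp only [Set.mem_preimage, Set.mem_Icc, hφQ z hz]
        exact this
      intro y hy
      exact Set.mem_Icc.mp (closure_minimal himg hS hy)
    · intro ε hε
      obtain ⟨z, hz, hzv⟩ := happ ε hε
      exact ⟨Q z, subset_closure (Set.mem_image_of_mem Q hz), by rw [hφQ z hz]; exact hzv⟩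
    · intro y hy w hw
      have hT : IsClosed {y : Esp n | evalFn f (y + w) = evalFn f y} :=
        isClosed_eq ((evalFn_continuous f).comp (continuous_id.add continuous_const))
          (evalFn_continuous f)
      refine closure_minimal ?_ hT hy
      rintro y' ⟨z, hz, rfl⟩
      obtain ⟨w', hw', hQz⟩ := hQdiff z
      show evalFn f (Q z + w) = evalFn f (Q z)
      rw [hQz]
      have h1 : z + w' + w = z + (w' + w) := by abel
      rw [h1, hinvV' z hz _ (Submodule.add_mem _ hw' hw), hinvV' z hz w' hw']
    · -- C' ⊆ closure of projection of F
      have hcomp : ∀ z : Esp n,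
          Q ((Submodule.orthogonalProjectionOnto Vᗮ z : Esp n)) = (Submodule.orthogonalProjectionOnto V'ᗮ z : Esp n) := by
        intro z
        simp only [hQ]
        exact congrArg _ (Submodule.orthogonalProjectionOnto_starProjection_of_le
          (Submodule.orthogonal_le hVle) z)
      apply closure_minimal _ isClosed_closure
      rintro y ⟨z, hzC, rfl⟩
      have h1 : z ∈ closure ((fun w => (Submodule.orthogonalProjectionOnto Vᗮ w : Esp n)) '' F) := hsub hzC
      have h2 : Q z ∈ closure (Q '' ((fun w => (Submodule.orthogonalProjectionOnto Vᗮ w : Esp n)) '' F)) :=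
        image_closure_subset_closure_image hQcont (Set.mem_image_of_mem Q h1)
      have h3 : Q '' ((fun w => (Submodule.orthogonalProjectionOnto Vᗮ w : Esp n)) '' F)
          = (fun w => (Submodule.orthogonalProjectionOnto V'ᗮ w : Esp n)) '' F := by
        rw [Set.image_image]
        exact Set.image_congr' hcomp
      rwa [h3] at h2

theorem polynomial_attains_inf_of_projections_closed {n : ℕ}
    (F : Set (EuclideanSpace ℝ (Fin n))) (hconv : Convex ℝ F)
    (hproj : ∀ K : Submodule ℝ (EuclideanSpace ℝ (Fin n)),
      IsClosed ((fun x => (K.orthogonalProjectionOnto x : EuclideanSpace ℝ (Fin n))) '' F))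
    (f : MvPolynomial (Fin n) ℝ)
    (hbdd : BddBelow ((fun x => MvPolynomial.eval (fun i => x i) f) '' F))
    (hlevel : ∃ α : ℝ,
      {x ∈ F | MvPolynomial.eval (fun i => x i) f ≤ α}.Nonempty ∧
      Convex ℝ {x ∈ F | MvPolynomial.eval (fun i => x i) f ≤ α}) :
    ∃ x₀ ∈ F, ∀ x ∈ F,
      MvPolynomial.eval (fun i => x₀ i) f ≤ MvPolynomial.eval (fun i => x i) f := by
  obtain ⟨α, hSne, hSconv⟩ := hlevel
  obtain ⟨x₀, hx₀F, hx₀α⟩ := hSne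
  have hbdd' : BddBelow (evalFn f '' F) := hbdd
  have hFne : (evalFn f '' F).Nonempty := ⟨_, Set.mem_image_of_mem _ hx₀F⟩
  set m := sInf (evalFn f '' F) with hm
  have hml : ∀ x ∈ F, m ≤ evalFn f x := fun x hx => csInf_le hbdd' (Set.mem_image_of_mem _ hx)
  have happF : ∀ ε : ℝ, 0 < ε → ∃ x ∈ F, evalFn f x < m + ε := by
    intro ε hε
    obtain ⟨v, hv, hvlt⟩ := exists_lt_of_csInf_lt hFne (lt_add_of_pos_right m hε)
    obtain ⟨x, hxF, rfl⟩ := hv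
    exact ⟨x, hxF, hvlt⟩
  have hx₀α' : evalFn f x₀ ≤ α := hx₀α
  have hmα : m ≤ α := (hml x₀ hx₀F).trans hx₀α'
  set C := {x ∈ F | evalFn f x ≤ α} with hC
  have hCne : C.Nonempty := ⟨x₀, hx₀F, hx₀α'⟩
  have hCconv : Convex ℝ C := hSconv
  have happC : ∀ ε : ℝ, 0 < ε → ∃ x ∈ C, evalFn f x < m + ε := by
    intro ε hε
    rcases eq_or_lt_of_le hmα with h|h
    · exact ⟨x₀, ⟨hx₀F, hx₀α'⟩, by rw [← h] at hx₀α'; linarith⟩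
    · obtain ⟨x, hxF, hxv⟩ := happF (min ε (α - m)) (lt_min hε (by linarith))
      have h1 := hxv.trans_le (add_le_add_right (min_le_left _ _) m)
      have h2 := hxv.trans_le (add_le_add_right (min_le_right _ _) m)
      exact ⟨x, ⟨hxF, by linarith⟩, h1⟩
  have hFc : IsClosed F := by
    have h := hproj ⊤
    have heq : (fun x => (Submodule.orthogonalProjectionOnto (⊤ : Submodule ℝ (Esp n)) x : Esp n)) '' F
        = F := by
      have h2 : ∀ x : Esp n,
          (Submodule.orthogonalProjectionOnto (⊤ : Submodule ℝ (Esp n)) x : Esp n) = id x :=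
        fun x => Submodule.starProjection_eq_self_iff.mpr trivial
      rw [Set.image_congr' h2, Set.image_id]
    rwa [heq] at h
  have hCc : IsClosed C := by
    have : C = F ∩ evalFn f ⁻¹' (Set.Iic α) := rfl
    rw [this]
    exact hFc.inter (isClosed_Iic.preimage (evalFn_continuous f))
  obtain ⟨xs, hxsF, hxsle⟩ := main_induction f F hproj m α
    (Module.finrank ℝ (((⊥ : Submodule ℝ (Esp n))ᗮ))) ⊥ C le_rfl hCne hCc hCconv
    (by intro x _; rw [Submodule.bot_orthogonal_eq_top]; trivial)
    (fun x hx => ⟨hml x hx.1, hx.2⟩)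
    happC
    (by
      intro x _ v hv
      rw [(Submodule.mem_bot ℝ).mp hv, add_zero])
    (by
      have h2 : ∀ x : Esp n,
          (Submodule.orthogonalProjectionOnto ((⊥ : Submodule ℝ (Esp n))ᗮ) x : Esp n) = id x := fun x =>
        Submodule.starProjection_eq_self_iff.mpr (by rw [Submodule.bot_orthogonal_eq_top]; trivial)
      rw [Set.image_congr' h2, Set.image_id]
      exact fun x hx => subset_closure hx.1)
  exact ⟨xs, hxsF, fun x hx => hxsle.trans (hml x hx)⟩
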